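/- Let n ≥ 2 with n not a power of 2, let p be the smallest odd prime dividing n, and ω = e^(2πi/n). Then there exists a vector ξ ∈ ℝⁿ with each coordinate ξⱼ ∈ {(p−1)/(2p), (p+1)/(2p)} such that l·ξ ∈ ℤ for every l ∈ ℤⁿ satisfying ∑ lₖωᵏ = 0. -/

import Mathlib

open Polynomial Finset

namespace Stmt10Aux

/-- shift endomorphism -/
noncomputable def shiftE (F : Type*) [CommSemiring F] : Module.End F (ℕ → F) where
  toFun f := fun i => f (i + 1)
  map_add' := by intros; rfl
  map_smul' := by intros; rfl

lemma shiftE_pow (F : Type*) [CommSemiring F] (k : ℕ) (f : ℕ → F) (i : ℕ) :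
    ((shiftE F ^ k) f) i = f (i + k) := by
  induction k generalizing f i with
  | zero => rfl
  | succ k ih =>
    rw [pow_succ]
    have h1 : ((shiftE F ^ k * shiftE F) f) i = ((shiftE F ^ k) (shiftE F f)) i := rfl
    rw [h1, ih (shiftE F f) i]
    simp [shiftE, add_assoc]

/-- annihilator ideal of a sequence -/
noncomputable def annI (F : Type*) [CommRing F] (f : ℕ → F) : Ideal (Polynomial F) where
  carrier := {P | (Polynomial.aeval (shiftE F) P) f = 0}
  add_mem' := by
    intro a b ha hb
    simp only [Set.mem_setOf_eq, map_add, LinearMap.add_apply] at *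
    rw [ha, hb, add_zero]
  zero_mem' := by simp
  smul_mem' := by
    intro c x hx
    simp only [Set.mem_setOf_eq, smul_eq_mul, map_mul, Module.End.mul_apply] at *
    rw [hx, map_zero]

lemma mem_annI {F : Type*} [CommRing F] {f : ℕ → F} {P : Polynomial F} :
    P ∈ annI F f ↔ (Polynomial.aeval (shiftE F) P) f = 0 := Iff.rfl

/-- the sign function -/
def gfun (p ℓ d : ℕ) : ℤ := if 2 * d < ℓ + (if ℓ = 2 then 0 else p) then 1 else -1

/-- the ±1 sequence -/
def eps (p n' : ℕ) (j : ℕ) : ℤ :=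
  ∏ ℓ ∈ n'.primeFactors, gfun p ℓ ((j % ℓ ^ n'.factorization ℓ) / ℓ ^ (n'.factorization ℓ - 1))

lemma gfun_pm (p ℓ d : ℕ) : gfun p ℓ d = 1 ∨ gfun p ℓ d = -1 := by
  unfold gfun
  by_cases h : 2 * d < ℓ + (if ℓ = 2 then 0 else p) <;> simp [h]

lemma eps_pm (p n' j : ℕ) : eps p n' j = 1 ∨ eps p n' j = -1 := by
  unfold eps
  refine Finset.prod_induction _ (fun x => x = 1 ∨ x = -1) ?_ (Or.inl rfl) ?_
  · rintro a b (rfl | rfl) (rfl | rfl) <;> norm_num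
  · intro ℓ _; exact gfun_pm _ _ _

lemma eps_periodic (p n' j : ℕ) : eps p n' (j + n') = eps p n' j := by
  unfold eps
  refine Finset.prod_congr rfl fun ℓ hℓ => ?_
  obtain ⟨t, ht⟩ := Nat.ordProj_dvd n' ℓ
  rw [show j + n' = j + ℓ ^ n'.factorization ℓ * t from by rw [← ht],
    Nat.add_mul_mod_self_left]


lemma mod_mul_add (Pm ℓ A r : ℕ) (h0 : 0 < Pm) (hr : r < Pm) (hl : 0 < ℓ) :
    (Pm * A + r) % (Pm * ℓ) = Pm * (A % ℓ) + r := by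
  have h1 : Pm * A + r = (Pm * (A % ℓ) + r) + (Pm * ℓ) * (A / ℓ) := by
    have := Nat.div_add_mod A ℓ
    nlinarith [Nat.div_add_mod A ℓ]
  rw [h1, Nat.add_mul_mod_self_left, Nat.mod_eq_of_lt]
  have hA : A % ℓ + 1 ≤ ℓ := Nat.mod_lt _ hl
  calc Pm * (A % ℓ) + r < Pm * (A % ℓ) + Pm := by omega
    _ = Pm * (A % ℓ + 1) := by ring
    _ ≤ Pm * ℓ := Nat.mul_le_mul_left _ hA

lemma digit_eq (ℓ c u j t : ℕ) (hc : 1 ≤ c) (hl : 0 < ℓ) :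
    ((j + t * (ℓ ^ (c - 1) * u)) % ℓ ^ c) / ℓ ^ (c - 1)
      = ((j % ℓ ^ c) / ℓ ^ (c - 1) + t * u) % ℓ := by
  have hP : ℓ ^ c = ℓ ^ (c - 1) * ℓ := by
    rw [← pow_succ]
    congr 1
    omega
  have h0 : 0 < ℓ ^ (c - 1) := pow_pos hl _
  have key : ∀ e r : ℕ, j % ℓ ^ c = ℓ ^ (c - 1) * e + r → r < ℓ ^ (c - 1) →
      ((j + t * (ℓ ^ (c - 1) * u)) % ℓ ^ c) / ℓ ^ (c - 1) = (e + t * u) % ℓ := by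
    intro e r h1 h2
    have h3 : (j + t * (ℓ ^ (c - 1) * u)) % ℓ ^ c
        = (ℓ ^ (c - 1) * (e + t * u) + r) % (ℓ ^ (c - 1) * ℓ) := by
      rw [← Nat.mod_add_mod, h1, ← hP]
      congr 1
      ring
    rw [h3, mod_mul_add _ _ _ _ h0 h2 hl, Nat.mul_add_div h0, Nat.div_eq_of_lt h2, add_zero]
  have hdvd : ℓ ^ (c - 1) ∣ ℓ ^ c := ⟨ℓ, hP⟩
  have hmm := Nat.div_add_mod (j % ℓ ^ c) (ℓ ^ (c - 1))
  rw [Nat.mod_mod_of_dvd j hdvd] at hmm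
  exact key _ _ hmm.symm (Nat.mod_lt _ h0)

lemma sum_gfun_shift (p ℓ e u : ℕ) (hl : ℓ.Prime) (hu : ¬ ℓ ∣ u) :
    ∑ t ∈ range ℓ, gfun p ℓ ((e + t * u) % ℓ) = ∑ d ∈ range ℓ, gfun p ℓ d := by
  haveI : Fact ℓ.Prime := ⟨hl⟩
  haveI : NeZero ℓ := ⟨hl.ne_zero⟩
  have hu0 : (u : ZMod ℓ) ≠ 0 := by
    rwa [Ne, ZMod.natCast_eq_zero_iff]
  refine Finset.sum_nbij' (i := fun t => (e + t * u) % ℓ)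
    (j := fun d => ((((d : ZMod ℓ) - (e : ZMod ℓ)) * (u : ZMod ℓ)⁻¹)).val)
    ?_ ?_ ?_ ?_ ?_
  · intro a _; exact Finset.mem_range.2 (Nat.mod_lt _ hl.pos)
  · intro a _; exact Finset.mem_range.2 (ZMod.val_lt _)
  · intro a ha
    have h2 : ((((e + a * u) % ℓ : ℕ) : ZMod ℓ) - (e : ZMod ℓ)) * (u : ZMod ℓ)⁻¹
        = (a : ZMod ℓ) := by
      rw [ZMod.natCast_mod]
      push_cast
      rw [add_sub_cancel_left, mul_assoc, mul_inv_cancel₀ hu0, mul_one]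
    show (((((e + a * u) % ℓ : ℕ) : ZMod ℓ) - (e : ZMod ℓ)) * (u : ZMod ℓ)⁻¹).val = a
    rw [h2, ZMod.val_natCast_of_lt (Finset.mem_range.1 ha)]
  · intro d hd
    have h3 : ((e + ((((d : ZMod ℓ) - (e : ZMod ℓ)) * (u : ZMod ℓ)⁻¹).val) * u : ℕ)
        : ZMod ℓ) = (d : ZMod ℓ) := by
      push_cast
      rw [ZMod.natCast_rightInverse _, mul_assoc, inv_mul_cancel₀ hu0, mul_one,
        add_sub_cancel]
    show (e + ((((d : ZMod ℓ) - (e : ZMod ℓ)) * (u : ZMod ℓ)⁻¹).val) * u) % ℓ = d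
    rw [← ZMod.val_natCast, h3, ZMod.val_natCast_of_lt (Finset.mem_range.1 hd)]
  · intro a _; rfl

lemma sum_gfun (p ℓ : ℕ) (hl : ℓ.Prime) (hpodd : Odd p) (hple : ℓ = 2 ∨ p ≤ ℓ) :
    ∑ d ∈ range ℓ, gfun p ℓ d = if ℓ = 2 then 0 else (p : ℤ) := by
  rcases eq_or_ne ℓ 2 with rfl | h2
  · norm_num [gfun, Finset.sum_range_succ]
  · have hlodd : Odd ℓ := hl.odd_of_ne_two h2
    have hpl : p ≤ ℓ := hple.resolve_left h2
    rw [if_neg h2]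
    have hlo : ℓ % 2 = 1 := Nat.odd_iff.1 hlodd
    have hpo : p % 2 = 1 := Nat.odd_iff.1 hpodd
    set m := (ℓ + p) / 2 with hm
    have hm2 : ℓ + p = 2 * m := by omega
    have hmℓ : m ≤ ℓ := by omega
    have hcongr : ∀ d, gfun p ℓ d = (if d < m then (1 : ℤ) else -1) := by
      intro d
      rw [gfun, if_neg h2]
      have : 2 * d < ℓ + p ↔ d < m := by omega
      simp [this]
    calc ∑ d ∈ range ℓ, gfun p ℓ d
        = ∑ d ∈ range m, gfun p ℓ d + ∑ d ∈ Ico m ℓ, gfun p ℓ d :=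
          (Finset.sum_range_add_sum_Ico _ hmℓ).symm
      _ = ∑ d ∈ range m, (1 : ℤ) + ∑ d ∈ Ico m ℓ, (-1 : ℤ) := by
          congr 1
          · exact Finset.sum_congr rfl fun d hd => by
              rw [hcongr d, if_pos (Finset.mem_range.1 hd)]
          · exact Finset.sum_congr rfl fun d hd => by
              rw [hcongr d, if_neg (by simpa using (Finset.mem_Ico.1 hd).1.not_gt)]
      _ = (m : ℤ) + -((ℓ - m : ℕ) : ℤ) := by simp [Nat.card_Ico]
      _ = (p : ℤ) := by
          push_cast [Nat.cast_sub hmℓ]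
          omega

lemma eps_sum (p n' : ℕ) (hp : p.Prime) (hpodd : Odd p) (hn'0 : 0 < n')
    (hmin : ∀ q : ℕ, q.Prime → q ∣ n' → q = 2 ∨ p ≤ q)
    {ℓ : ℕ} (hℓ : ℓ ∈ n'.primeFactors) (j : ℕ) :
    (p : ℤ) ∣ ∑ t ∈ range ℓ, eps p n' (j + t * (n' / ℓ)) := by
  have hlp : ℓ.Prime := Nat.prime_of_mem_primeFactors hℓ
  have hld : ℓ ∣ n' := Nat.dvd_of_mem_primeFactors hℓ
  have hc1 : 1 ≤ n'.factorization ℓ := (Nat.Prime.factorization_pos_of_dvd hlp hn'0.ne' hld)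
  have hucop : ¬ ℓ ∣ n' / ℓ ^ n'.factorization ℓ := Nat.not_dvd_ordCompl hlp hn'0.ne'
  have hn'eq : n' = ℓ ^ n'.factorization ℓ * (n' / ℓ ^ n'.factorization ℓ) :=
    (Nat.ordProj_mul_ordCompl_eq_self n' ℓ).symm
  have hs : n' / ℓ = ℓ ^ (n'.factorization ℓ - 1) * (n' / ℓ ^ n'.factorization ℓ) := by
    conv_lhs => rw [hn'eq]
    rw [show ℓ ^ n'.factorization ℓ = ℓ * ℓ ^ (n'.factorization ℓ - 1) from by
        rw [← pow_succ']; congr 1; omega,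
      mul_assoc, Nat.mul_div_cancel_left _ hlp.pos]
  have key : ∀ t, eps p n' (j + t * (n' / ℓ))
      = gfun p ℓ (((j % ℓ ^ n'.factorization ℓ) / ℓ ^ (n'.factorization ℓ - 1)
            + t * (n' / ℓ ^ n'.factorization ℓ)) % ℓ)
        * ∏ q ∈ n'.primeFactors.erase ℓ,
            gfun p q ((j % q ^ n'.factorization q) / q ^ (n'.factorization q - 1)) := by
    intro t
    rw [eps, ← Finset.mul_prod_erase _ _ hℓ]
    congr 1
    · rw [hs, digit_eq ℓ (n'.factorization ℓ) _ j t hc1 hlp.pos]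
    · refine Finset.prod_congr rfl fun q hq => ?_
      have hqp : q.Prime := Nat.prime_of_mem_primeFactors (Finset.mem_of_mem_erase hq)
      have hqℓ : q ≠ ℓ := Finset.ne_of_mem_erase hq
      have hqd : q ^ n'.factorization q ∣ n' / ℓ := by
        have h1 : q ^ n'.factorization q ∣ n' := Nat.ordProj_dvd n' q
        have hcop : Nat.Coprime (q ^ n'.factorization q) ℓ :=
          Nat.Coprime.pow_left _ ((Nat.coprime_primes hqp hlp).2 hqℓ)
        have h2 : n' = ℓ * (n' / ℓ) := (Nat.mul_div_cancel' hld).symm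
        have h1' : q ^ n'.factorization q ∣ ℓ * (n' / ℓ) := by rw [← h2]; exact h1
        exact hcop.dvd_of_dvd_mul_left h1' 
      obtain ⟨w, hw⟩ := hqd
      congr 2
      rw [show j + t * (n' / ℓ) = j + q ^ n'.factorization q * (t * w) from by
        rw [hw]; ring, Nat.add_mul_mod_self_left]
  rw [Finset.sum_congr rfl fun t _ => key t, ← Finset.sum_mul,
    sum_gfun_shift p ℓ _ _ hlp hucop, sum_gfun p ℓ hlp hpodd (hmin ℓ hlp hld)]
  split
  · simp
  · exact Dvd.intro _ rfl

noncomputable def epsBar (p n' : ℕ) : ℕ → ZMod p := fun i => ((eps p n' i : ℤ) : ZMod p)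

lemma X_pow_sub_one_mem (p n' : ℕ) [Fact p.Prime] :
    (X ^ n' - 1 : (ZMod p)[X]) ∈ annI (ZMod p) (epsBar p n') := by
  rw [mem_annI, map_sub, map_one, aeval_X_pow]
  funext i
  simp only [LinearMap.sub_apply, Module.End.one_apply, shiftE_pow, Pi.sub_apply,
    Pi.zero_apply]
  show ((eps p n' (i + n') : ℤ) : ZMod p) - ((eps p n' i : ℤ) : ZMod p) = 0
  rw [eps_periodic, sub_self]

lemma T_mem (p n' : ℕ) [Fact p.Prime] (hpodd : Odd p) (hn'0 : 0 < n')
    (hmin : ∀ q : ℕ, q.Prime → q ∣ n' → q = 2 ∨ p ≤ q)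
    {ℓ : ℕ} (hℓ : ℓ ∈ n'.primeFactors) :
    (∑ t ∈ range ℓ, (X : (ZMod p)[X]) ^ (t * (n' / ℓ))) ∈ annI (ZMod p) (epsBar p n') := by
  rw [mem_annI, map_sum]
  funext i
  simp only [aeval_X_pow, LinearMap.coe_sum, Finset.sum_apply, shiftE_pow, Pi.zero_apply]
  have : ∀ t ∈ range ℓ, epsBar p n' (i + t * (n' / ℓ))
      = ((eps p n' (i + t * (n' / ℓ)) : ℤ) : ZMod p) := fun _ _ => rfl
  rw [Finset.sum_congr rfl this, ← Int.cast_sum, ZMod.intCast_zmod_eq_zero_iff_dvd]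
  exact_mod_cast eps_sum p n' (Fact.out) hpodd hn'0 hmin hℓ i

lemma cyclotomic_mem (p n' : ℕ) [Fact p.Prime] (hpodd : Odd p) (hn'0 : 0 < n')
    (hpn' : ¬ p ∣ n')
    (hmin : ∀ q : ℕ, q.Prime → q ∣ n' → q = 2 ∨ p ≤ q) :
    cyclotomic n' (ZMod p) ∈ annI (ZMod p) (epsBar p n') := by
  set J := annI (ZMod p) (epsBar p n') with hJdef
  set g₀ := Submodule.IsPrincipal.generator J with hg₀
  rw [Submodule.IsPrincipal.mem_iff_generator_dvd J]
  have hg1 : g₀ ∣ X ^ n' - 1 :=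
    (Submodule.IsPrincipal.mem_iff_generator_dvd J).1 (X_pow_sub_one_mem p n')
  have hgT : ∀ ℓ ∈ n'.primeFactors,
      g₀ ∣ ∑ t ∈ range ℓ, (X : (ZMod p)[X]) ^ (t * (n' / ℓ)) := fun ℓ hℓ =>
    (Submodule.IsPrincipal.mem_iff_generator_dvd J).1 (T_mem p n' hpodd hn'0 hmin hℓ)
  have hcast : ((n' : ℕ) : ZMod p) ≠ 0 := by
    rw [Ne, ZMod.natCast_eq_zero_iff]
    exact hpn'
  have hsep : (X ^ n' - 1 : (ZMod p)[X]).Separable := by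
    have := Polynomial.separable_X_pow_sub_C (1 : ZMod p) hcast one_ne_zero
    simpa using this
  have hTfac : ∀ ℓ ∈ n'.primeFactors,
      (∑ t ∈ range ℓ, (X : (ZMod p)[X]) ^ (t * (n' / ℓ))) * (X ^ (n' / ℓ) - 1)
        = X ^ n' - 1 := by
    intro ℓ hℓ
    have hld : ℓ ∣ n' := Nat.dvd_of_mem_primeFactors hℓ
    have h1 : ∀ t, (X : (ZMod p)[X]) ^ (t * (n' / ℓ)) = ((X : (ZMod p)[X]) ^ (n' / ℓ)) ^ t := by
      intro t
      rw [← pow_mul, mul_comm]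
    rw [Finset.sum_congr rfl fun t _ => h1 t, geom_sum_mul, ← pow_mul,
      Nat.div_mul_cancel hld]
  have hcop : ∀ ℓ ∈ n'.primeFactors,
      IsCoprime (∑ t ∈ range ℓ, (X : (ZMod p)[X]) ^ (t * (n' / ℓ)))
        ((X : (ZMod p)[X]) ^ (n' / ℓ) - 1) := by
    intro ℓ hℓ
    refine Polynomial.Separable.isCoprime ?_
    rw [hTfac ℓ hℓ]
    exact hsep
  have hfac : (X ^ n' - 1 : (ZMod p)[X])
      = cyclotomic n' (ZMod p) * ∏ d ∈ n'.properDivisors, cyclotomic d (ZMod p) := by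
    rw [← prod_cyclotomic_eq_X_pow_sub_one hn'0, ← Nat.insert_self_properDivisors hn'0.ne',
      Finset.prod_insert Nat.self_notMem_properDivisors]
  have hWcop : IsCoprime g₀ (∏ d ∈ n'.properDivisors, cyclotomic d (ZMod p)) := by
    refine IsCoprime.prod_right fun d hd => ?_
    obtain ⟨hdvd, hdlt⟩ := Nat.mem_properDivisors.1 hd
    have hd0 : 0 < d := Nat.pos_of_dvd_of_pos hdvd hn'0
    have hnd : n' / d ≠ 1 := by
      intro h1
      have := Nat.div_mul_cancel hdvd
      rw [h1, one_mul] at this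
      omega
    obtain ⟨ℓ, hℓp, hℓd⟩ := Nat.exists_prime_and_dvd hnd
    have hℓn' : ℓ ∣ n' := hℓd.trans (Nat.div_dvd_of_dvd hdvd)
    have hℓmem : ℓ ∈ n'.primeFactors := Nat.mem_primeFactors.2 ⟨hℓp, hℓn', hn'0.ne'⟩
    obtain ⟨k, hk⟩ := hℓd
    have hn'dk : n' = ℓ * (d * k) := by
      have h2 := Nat.div_mul_cancel hdvd
      rw [hk] at h2
      rw [← h2]; ring
    have hddvd : d ∣ n' / ℓ := by
      rw [hn'dk, Nat.mul_div_cancel_left _ hℓp.pos]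
      exact Dvd.intro k rfl
    obtain ⟨k2, hk2⟩ := hddvd
    have hcyc_dvd : cyclotomic d (ZMod p) ∣ (X : (ZMod p)[X]) ^ (n' / ℓ) - 1 := by
      refine (cyclotomic.dvd_X_pow_sub_one d (ZMod p)).trans ?_
      rw [hk2, pow_mul]
      exact Dvd.intro_left _ (geom_sum_mul _ k2)
    exact ((hcop ℓ hℓmem).of_isCoprime_of_dvd_left (hgT ℓ hℓmem)).of_isCoprime_of_dvd_right
      hcyc_dvd
  refine hWcop.dvd_of_dvd_mul_right ?_
  rw [← hfac]
  exact hg1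

end Stmt10Aux

open Stmt10Aux Polynomial Finset in
theorem stmt_10 (n : ℕ) (hn : 2 ≤ n) (hn2 : ¬ ∃ a : ℕ, n = 2 ^ a)
    (p : ℕ) (hp : p = sInf {q : ℕ | q.Prime ∧ Odd q ∧ q ∣ n}) :
    ∃ ξ : Fin n → ℝ,
      (∀ j, ξ j = ((p : ℝ) - 1) / (2 * p) ∨ ξ j = ((p : ℝ) + 1) / (2 * p)) ∧
      ∀ l : Fin n → ℤ,
        (∑ k : Fin n, (l k : ℂ) *
          Complex.exp (2 * Real.pi * Complex.I / n) ^ (k : ℕ)) = 0 →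
        ∃ z : ℤ, ∑ i, (l i : ℝ) * ξ i = z := by
  have hn0 : n ≠ 0 := by omega
  have hnpos : 0 < n := by omega
  -- the set of odd prime divisors is nonempty
  have hne : {q : ℕ | q.Prime ∧ Odd q ∧ q ∣ n}.Nonempty := by
    by_cases h1 : n / 2 ^ n.factorization 2 = 1
    · exfalso
      apply hn2
      refine ⟨n.factorization 2, ?_⟩
      have h2 := Nat.ordProj_mul_ordCompl_eq_self n 2
      rw [h1, mul_one] at h2
      omega
    · obtain ⟨q, hq, hqd⟩ := Nat.exists_prime_and_dvd h1
      have hq2 : q ≠ 2 := by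
        rintro rfl
        exact Nat.not_dvd_ordCompl Nat.prime_two hn0 hqd
      exact ⟨q, hq, hq.odd_of_ne_two hq2, hqd.trans (Nat.ordCompl_dvd n 2)⟩
  have hpmem : p.Prime ∧ Odd p ∧ p ∣ n := by
    rw [hp]; exact Nat.sInf_mem hne
  obtain ⟨hpp, hpodd, hpdvd⟩ := hpmem
  haveI : Fact p.Prime := ⟨hpp⟩
  set b := n.factorization p with hbdef
  set n' := n / p ^ b with hn'def
  have hb1 : 1 ≤ b := hpp.factorization_pos_of_dvd hn0 hpdvd
  have hneq : n = p ^ b * n' := (Nat.ordProj_mul_ordCompl_eq_self n p).symm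
  have hpn' : ¬ p ∣ n' := Nat.not_dvd_ordCompl hpp hn0
  have hn'0 : 0 < n' := Nat.ordCompl_pos p hn0
  have hmin : ∀ q : ℕ, q.Prime → q ∣ n' → q = 2 ∨ p ≤ q := by
    intro q hq hqd
    rcases eq_or_ne q 2 with rfl | hq2
    · exact Or.inl rfl
    · refine Or.inr ?_
      rw [hp]
      exact Nat.sInf_le ⟨hq, hq.odd_of_ne_two hq2, hqd.trans (Nat.ordCompl_dvd n p)⟩
  have hppos : 0 < p := hpp.pos
  -- definition of ξ
  refine ⟨fun j => ((p : ℝ) + ((eps p n' (j : ℕ) : ℤ) : ℝ)) / (2 * p), ?_, ?_⟩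
  · intro j
    dsimp only
    rcases eps_pm p n' (j : ℕ) with h | h <;> rw [h]
    · right; norm_num
    · left; push_cast; ring_nf
  · intro l hl
    -- the polynomial L
    set L : Polynomial ℤ := ∑ k : Fin n, C (l k) * X ^ (k : ℕ) with hLdef
    have hprim := Complex.isPrimitiveRoot_exp n hn0
    have hroot : aeval (Complex.exp (2 * Real.pi * Complex.I / n)) L = 0 := by
      rw [hLdef, map_sum]
      rw [← hl]
      refine Finset.sum_congr rfl fun k _ => ?_
      rw [map_mul, aeval_C, map_pow, aeval_X]
      simp
    have hdvd : cyclotomic n ℤ ∣ L := by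
      have hratdvd : minpoly ℚ (Complex.exp (2 * Real.pi * Complex.I / n))
          ∣ L.map (Int.castRingHom ℚ) := by
        apply minpoly.dvd
        rw [show (Int.castRingHom ℚ) = algebraMap ℤ ℚ from rfl, aeval_map_algebraMap]
        exact hroot
      rw [← cyclotomic_eq_minpoly_rat hprim hnpos, ← map_cyclotomic_int n ℚ] at hratdvd
      exact (map_dvd_map _ Int.cast_injective (cyclotomic.monic n ℤ)).1 hratdvd
    obtain ⟨H, hH⟩ := hdvd
    -- main divisibility
    have hKey : (p : ℤ) ∣ ∑ i : Fin n, l i * eps p n' (i : ℕ) := by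
      rw [← ZMod.intCast_zmod_eq_zero_iff_dvd]
      have hA : ((∑ i : Fin n, l i * eps p n' (i : ℕ) : ℤ) : ZMod p)
          = (aeval (shiftE (ZMod p)) (L.map (Int.castRingHom (ZMod p))))
              (epsBar p n') 0 := by
        rw [hLdef, Polynomial.map_sum, map_sum]
        rw [Int.cast_sum]
        simp only [Polynomial.map_mul, Polynomial.map_C, Polynomial.map_pow,
          Polynomial.map_X, map_mul, aeval_C, map_pow, aeval_X,
          LinearMap.coe_sum, Finset.sum_apply]
        refine Finset.sum_congr rfl fun k _ => ?_
        rw [Int.cast_mul, Module.End.mul_apply, Module.algebraMap_end_apply,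
          Pi.smul_apply, shiftE_pow, zero_add]
        rfl
      rw [hA]
      -- vanishing
      have hcyc : cyclotomic n (ZMod p) = cyclotomic n' (ZMod p) ^ (p ^ b - p ^ (b - 1)) := by
        rw [hneq]
        exact cyclotomic_mul_prime_pow_eq (ZMod p) hpn' hb1
      have he0 : p ^ b - p ^ (b - 1) ≠ 0 := by
        have := Nat.pow_lt_pow_right hpp.one_lt (show b - 1 < b by omega)
        omega
      have hdl : cyclotomic n' (ZMod p) ∣ L.map (Int.castRingHom (ZMod p)) := by
        rw [hH, Polynomial.map_mul, map_cyclotomic_int, hcyc]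
        exact Dvd.dvd.mul_right (dvd_pow_self _ he0) _
      obtain ⟨V, hV⟩ := hdl
      have hmem : L.map (Int.castRingHom (ZMod p)) ∈ annI (ZMod p) (epsBar p n') := by
        rw [hV, mul_comm]
        exact Ideal.mul_mem_left _ V (cyclotomic_mem p n' hpodd hn'0 hpn' hmin)
      rw [mem_annI] at hmem
      rw [hmem]
      rfl
    -- assemble
    set K : ℤ := ∑ i : Fin n, l i * ((p : ℤ) + eps p n' (i : ℕ)) with hKdef
    have h2K : (2 : ℤ) ∣ K := by
      refine Finset.dvd_sum fun i _ => dvd_mul_of_dvd_right ?_ _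
      obtain ⟨m, hm⟩ := hpodd
      rcases eps_pm p n' (i : ℕ) with h | h <;> rw [h]
      · exact ⟨(m : ℤ) + 1, by push_cast [hm]; ring⟩
      · exact ⟨(m : ℤ), by push_cast [hm]; ring⟩
    have hpK : (p : ℤ) ∣ K := by
      have hsplit : K = (∑ i : Fin n, l i * p) + ∑ i : Fin n, l i * eps p n' (i : ℕ) := by
        rw [hKdef, ← Finset.sum_add_distrib]
        exact Finset.sum_congr rfl fun i _ => by ring
      rw [hsplit]
      exact dvd_add (Finset.dvd_sum fun i _ => ⟨l i, mul_comm _ _⟩) hKey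
    obtain ⟨m, hm⟩ := hpodd
    have hcop : IsCoprime (2 : ℤ) (p : ℤ) := ⟨m + 1, -1, by push_cast [hm]; ring⟩
    obtain ⟨z, hz⟩ := hcop.mul_dvd h2K hpK
    refine ⟨z, ?_⟩
    have h2p0 : (2 * (p : ℝ)) ≠ 0 := by positivity
    have hstep : ∑ i, (l i : ℝ) * (((p : ℝ) + ((eps p n' (i : ℕ) : ℤ) : ℝ)) / (2 * p))
        = (K : ℝ) / (2 * p) := by
      rw [hKdef]
      push_cast
      rw [Finset.sum_div]
      exact Finset.sum_congr rfl fun i _ => by ring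
    rw [hstep, hz]
    push_cast
    field_simp
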